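/- arXiv:1402.2245 — 3 statements merged into one kernel-verified Lean document; each statement's English description precedes it below -/
import Mathlib

section
/- Let Σ be a signature and φ, ψ two Σ-algebra endomorphisms on the algebra of possibly infinite terms Ter^∞(Σ,V) that agree on all variables. Then φ = ψ. -/
namespace IRW

abbrev Pos := List ℕ

def arity {Sig V : Type} (ar : Sig → ℕ) : Sig ⊕ V → ℕ
  | Sum.inl f => ar f
  | Sum.inr _ => 0

abbrev PTerm (Sig V : Type) := Pos → Option (Sig ⊕ V)

variable {Sig V : Type}

def posOf (t : PTerm Sig V) : Set Pos := {p | (t p).isSome}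

def IsTerm (ar : Sig → ℕ) (t : PTerm Sig V) : Prop :=
  ([] : Pos) ∈ posOf t ∧
  (∀ p q : Pos, p ++ q ∈ posOf t → p ∈ posOf t) ∧
  (∀ (p : Pos) (h : Sig ⊕ V), t p = some h →
    ∀ i : ℕ, (p ++ [i]) ∈ posOf t ↔ 1 ≤ i ∧ i ≤ arity ar h)

def varT (x : V) : PTerm Sig V := fun p => if p = [] then some (Sum.inr x) else none

def mkFun (ar : Sig → ℕ) (f : Sig) (ts : ℕ → PTerm Sig V) : PTerm Sig V := fun p =>
  match p with
  | [] => some (Sum.inl f)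
  | i :: q => if 1 ≤ i ∧ i ≤ ar f then ts i q else none

def subAt (t : PTerm Sig V) (p : Pos) : PTerm Sig V := fun q => t (p ++ q)

def replAt (t u : PTerm Sig V) (p : Pos) : PTerm Sig V := fun q =>
  if p <+: q then u (q.drop p.length) else t q

def Disj (p q : Pos) : Prop := ¬ p <+: q ∧ ¬ q <+: p

open Classical in
noncomputable def tdist (t u : PTerm Sig V) : ℝ :=
  if t = u then 0
  else (2 : ℝ)⁻¹ ^ sInf {n : ℕ | ∃ p : Pos, p.length = n ∧ t p ≠ u p}

open Classical in
noncomputable def substExt (σ : V → PTerm Sig V) (t : PTerm Sig V) : PTerm Sig V := fun p =>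
  if h : ∃ x : V, ∃ p₀ q : Pos, p = p₀ ++ q ∧ t p₀ = some (Sum.inr x)
  then σ h.choose h.choose_spec.choose_spec.choose
  else t p

/-- `φ` is a `Σ`-algebra endomorphism of `Ter^∞(Σ,V)`: it maps terms to terms and
commutes with each function symbol. -/
def IsEndo {Sig V : Type} (ar : Sig → ℕ) (φ : PTerm Sig V → PTerm Sig V) : Prop :=
  (∀ t : PTerm Sig V, IsTerm ar t → IsTerm ar (φ t)) ∧
  (∀ (f : Sig) (ts : ℕ → PTerm Sig V),
    (∀ i : ℕ, 1 ≤ i → i ≤ ar f → IsTerm ar (ts i)) →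
    φ (mkFun ar f ts) = mkFun ar f (fun i => φ (ts i)))

lemma term_var_eq {ar : Sig → ℕ} {t : PTerm Sig V} (ht : IsTerm ar t) {x : V}
    (hx : t [] = some (Sum.inr x)) : t = varT x := by
  funext p
  cases p with
  | nil => simpa [varT] using hx
  | cons i q =>
    simp only [varT, if_neg (List.cons_ne_nil i q)]
    by_contra h
    have hmem : (i :: q) ∈ posOf t := by
      simp [posOf, Option.isSome_iff_ne_none, h]
    have h1 : ([i] : Pos) ∈ posOf t := ht.2.1 [i] q hmem
    have := (ht.2.2 [] _ hx i).mp (by simpa using h1)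
    simp [arity] at this
    omega

lemma term_child_mem {ar : Sig → ℕ} {t : PTerm Sig V} (ht : IsTerm ar t) {f : Sig}
    (hf : t [] = some (Sum.inl f)) {i : ℕ} (h1 : 1 ≤ i) (h2 : i ≤ ar f) :
    ([i] : Pos) ∈ posOf t := by
  have := (ht.2.2 [] _ hf i).mpr ⟨h1, h2⟩
  simpa using this

lemma term_fun_eq {ar : Sig → ℕ} {t : PTerm Sig V} (ht : IsTerm ar t) {f : Sig}
    (hf : t [] = some (Sum.inl f)) : t = mkFun ar f (fun i => subAt t [i]) := by
  funext p
  cases p with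
  | nil => simpa [mkFun] using hf
  | cons i q =>
    simp only [mkFun]
    by_cases hc : 1 ≤ i ∧ i ≤ ar f
    · rw [if_pos hc]; rfl
    · rw [if_neg hc]
      by_contra h
      have hmem : (i :: q) ∈ posOf t := by
        simp [posOf, Option.isSome_iff_ne_none, h]
      have h1 : ([i] : Pos) ∈ posOf t := ht.2.1 [i] q hmem
      have := (ht.2.2 [] _ hf i).mp (by simpa using h1)
      simp [arity] at this
      exact hc this

lemma subAt_isTerm {ar : Sig → ℕ} {t : PTerm Sig V} (ht : IsTerm ar t) {i : ℕ}
    (hi : ([i] : Pos) ∈ posOf t) : IsTerm ar (subAt t [i]) := by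
  refine ⟨?_, ?_, ?_⟩
  · simpa [posOf, subAt] using hi
  · intro p q hpq
    have hpq' : ([i] ++ p) ++ q ∈ posOf t := by
      simpa [posOf, subAt, List.append_assoc] using hpq
    have := ht.2.1 ([i] ++ p) q hpq'
    simpa [posOf, subAt] using this
  · intro p h hp j
    have hp' : t ([i] ++ p) = some h := hp
    have := ht.2.2 ([i] ++ p) h hp' j
    constructor
    · intro hm
      exact this.mp (by simpa [posOf, subAt, List.append_assoc] using hm)
    · intro hm
      have := this.mpr hm
      simpa [posOf, subAt, List.append_assoc] using this

/-- Two endomorphisms of `Ter^∞(Σ,V)` that agree on all variables are equal. -/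
theorem stmt9 {Sig V : Type} (ar : Sig → ℕ) (φ ψ : PTerm Sig V → PTerm Sig V)
    (hφ : IsEndo ar φ) (hψ : IsEndo ar ψ)
    (hvar : ∀ x : V, φ (varT x) = ψ (varT x)) :
    ∀ t : PTerm Sig V, IsTerm ar t → φ t = ψ t := by
  have key : ∀ p : Pos, ∀ t : PTerm Sig V, IsTerm ar t → φ t p = ψ t p := by
    intro p
    induction p with
    | nil =>
      intro t ht
      obtain ⟨h, hroot⟩ := Option.isSome_iff_exists.mp ht.1
      cases h with
      | inr x => rw [term_var_eq ht hroot, hvar]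
      | inl f =>
        have hsub : ∀ i : ℕ, 1 ≤ i → i ≤ ar f → IsTerm ar (subAt t [i]) :=
          fun i h1 h2 => subAt_isTerm ht (term_child_mem ht hroot h1 h2)
        rw [term_fun_eq ht hroot, hφ.2 f _ hsub, hψ.2 f _ hsub]
        rfl
    | cons i q ih =>
      intro t ht
      obtain ⟨h, hroot⟩ := Option.isSome_iff_exists.mp ht.1
      cases h with
      | inr x => rw [term_var_eq ht hroot, hvar]
      | inl f =>
        have hsub : ∀ j : ℕ, 1 ≤ j → j ≤ ar f → IsTerm ar (subAt t [j]) :=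
          fun j h1 h2 => subAt_isTerm ht (term_child_mem ht hroot h1 h2)
        rw [term_fun_eq ht hroot, hφ.2 f _ hsub, hψ.2 f _ hsub]
        simp only [mkFun]
        by_cases hc : 1 ≤ i ∧ i ≤ ar f
        · rw [if_pos hc, if_pos hc]
          exact ih _ (hsub i hc.1 hc.2)
        · rw [if_neg hc, if_neg hc]
  intro t ht
  funext p
  exact key p t ht

end IRW
end

section
/- Let ⟨a_α⟩_{α<β} be a strongly convergent (possibly transfinite) reduction sequence with source t, target u, and n < ω such that the depth of every step exceeds n. Then d(t,u) < 2^{-n}, where d is the term distance. -/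
namespace IRW

variable {Sig V : Type}

def IsStep (rules : Set (PTerm Sig V × PTerm Sig V)) (s : PTerm Sig V) (p : Pos)
    (t : PTerm Sig V) : Prop :=
  p ∈ posOf s ∧
  ∃ lr ∈ rules, ∃ σ : V → PTerm Sig V,
    subAt s p = substExt σ lr.1 ∧ t = replAt s (substExt σ lr.2) p

structure RedSeq (ar : Sig → ℕ) (rules : Set (PTerm Sig V × PTerm Sig V))
    (β : Ordinal) where
  src : Ordinal → PTerm Sig V
  rpos : Ordinal → Pos
  tgt : Ordinal → PTerm Sig V
  srcTerm : ∀ α, α < β → IsTerm ar (src α)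
  tgtTerm : ∀ α, α < β → IsTerm ar (tgt α)
  isStep : ∀ α, α < β → IsStep rules (src α) (rpos α) (tgt α)
  succCoh : ∀ α, α + 1 < β → src (α + 1) = tgt α
  limSrc : ∀ β₀, β₀ < β → Order.IsSuccLimit β₀ → ∀ n : ℕ,
    ∃ α₀, α₀ < β₀ ∧ ∀ α, α₀ < α → α < β₀ → tdist (tgt α) (src β₀) < (2 : ℝ)⁻¹ ^ n
  limDepth : ∀ β₀, β₀ < β → Order.IsSuccLimit β₀ → ∀ n : ℕ,
    ∃ α₀, α₀ < β₀ ∧ ∀ α, α₀ < α → α < β₀ → n < (rpos α).length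

def RedSeq.Converges {ar : Sig → ℕ} {rules : Set (PTerm Sig V × PTerm Sig V)} {β : Ordinal}
    (Sq : RedSeq ar rules β) (u : PTerm Sig V) : Prop :=
  (β = 0 ∧ u = Sq.src 0) ∨
  (∃ α, β = α + 1 ∧ u = Sq.tgt α) ∨
  (Order.IsSuccLimit β ∧
    (∀ n : ℕ, ∃ α₀, α₀ < β ∧ ∀ α, α₀ < α → α < β → tdist (Sq.tgt α) u < (2 : ℝ)⁻¹ ^ n) ∧
    (∀ n : ℕ, ∃ α₀, α₀ < β ∧ ∀ α, α₀ < α → α < β → n < (Sq.rpos α).length))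

def NF (rules : Set (PTerm Sig V × PTerm Sig V)) (t : PTerm Sig V) : Prop :=
  ∀ p u, ¬ IsStep rules t p u

lemma lt_add_one (α : Ordinal) : α < α + 1 := by
  rw [Ordinal.add_one_eq_succ]; exact Order.lt_succ α

/-- Agreement up to depth n. -/
def Agr (n : ℕ) (t u : PTerm Sig V) : Prop :=
  ∀ q : Pos, q.length ≤ n → t q = u q

lemma Agr.trans {n : ℕ} {t u v : PTerm Sig V} (h1 : Agr n t u) (h2 : Agr n u v) :
    Agr n t v := fun q hq => (h1 q hq).trans (h2 q hq)

lemma tdist_lt_iff_agr (n : ℕ) (t u : PTerm Sig V) :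
    tdist t u < (2 : ℝ)⁻¹ ^ n ↔ Agr n t u := by
  classical
  rcases eq_or_ne t u with rfl | hne
  · simp only [tdist, if_pos rfl]
    constructor
    · intro _ q _; rfl
    · intro _; positivity
  · rw [tdist, if_neg hne]
    set S : Set ℕ := {k : ℕ | ∃ p : Pos, p.length = k ∧ t p ≠ u p} with hS
    have hSne : S.Nonempty := by
      have : ∃ p : Pos, t p ≠ u p := by
        by_contra h
        push_neg at h
        exact hne (funext h)
      obtain ⟨p, hp⟩ := this
      exact ⟨p.length, p, rfl, hp⟩
    have hmem : sInf S ∈ S := Nat.sInf_mem hSne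
    have hb0 : (0:ℝ) < (2:ℝ)⁻¹ := by norm_num
    have hb1 : (2:ℝ)⁻¹ < 1 := by norm_num
    constructor
    · intro hlt q hq
      by_contra hne'
      have hqS : q.length ∈ S := ⟨q, rfl, hne'⟩
      have h1 : sInf S ≤ q.length := Nat.sInf_le hqS
      have h2 : n < sInf S := by
        by_contra h
        push_neg at h
        have := pow_le_pow_of_le_one (le_of_lt hb0) (le_of_lt hb1) h
        exact absurd hlt (not_lt.mpr this)
      omega
    · intro hagr
      have h2 : n < sInf S := by
        obtain ⟨p, hp, hpne⟩ := hmem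
        by_contra h
        push_neg at h
        exact hpne (hagr p (by omega))
      exact pow_lt_pow_right_of_lt_one₀ hb0 hb1 h2

lemma agr_step {rules : Set (PTerm Sig V × PTerm Sig V)} {s : PTerm Sig V} {p : Pos}
    {t : PTerm Sig V} {n : ℕ} (h : IsStep rules s p t) (hd : n < p.length) :
    Agr n s t := by
  obtain ⟨-, lr, -, σ, -, ht⟩ := h
  intro q hq
  rw [ht, replAt]
  rw [if_neg]
  intro hpre
  have := hpre.length_le
  omega

lemma agr_src_tgt {ar : Sig → ℕ} {rules : Set (PTerm Sig V × PTerm Sig V)} {β : Ordinal}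
    (Sq : RedSeq ar rules β) (n : ℕ)
    (hdepth : ∀ α, α < β → n < (Sq.rpos α).length) :
    ∀ α, α < β → Agr n (Sq.src 0) (Sq.tgt α) := by
  intro α
  induction α using Ordinal.limitRecOn with
  | zero =>
    intro h0
    exact agr_step (Sq.isStep 0 h0) (hdepth 0 h0)
  | add_one γ ih =>
    intro hlt
    have hγ : γ < β := lt_trans (IRW.lt_add_one γ) hlt
    have h1 : Agr n (Sq.src 0) (Sq.src (γ + 1)) := by
      rw [Sq.succCoh γ hlt]; exact ih hγ
    exact h1.trans (agr_step (Sq.isStep _ hlt) (hdepth _ hlt))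
  | limit γ hγlim ih =>
    intro hlt
    obtain ⟨α₀, hα₀, hconv⟩ := Sq.limSrc γ hlt hγlim n
    have hs : α₀ + 1 < γ := by rw [Ordinal.add_one_eq_succ]; exact hγlim.succ_lt hα₀
    have h1 : Agr n (Sq.src 0) (Sq.tgt (α₀ + 1)) :=
      ih (α₀ + 1) hs (lt_trans hs hlt)
    have h2 : Agr n (Sq.tgt (α₀ + 1)) (Sq.src γ) :=
      (tdist_lt_iff_agr n _ _).mp (hconv _ (IRW.lt_add_one α₀) hs)
    have hγβ : γ < β := hlt
    exact (h1.trans h2).trans (agr_step (Sq.isStep γ hγβ) (hdepth γ hγβ))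

/-- If every step of a strongly convergent reduction sequence from `t` to `u`
has depth greater than `n`, then `d(t,u) < 2^{-n}`. -/
theorem stmt11 {Sig V : Type} (ar : Sig → ℕ)
    (rules : Set (PTerm Sig V × PTerm Sig V)) (β : Ordinal)
    (Sq : RedSeq ar rules β) (u : PTerm Sig V) (n : ℕ)
    (hconv : Sq.Converges u)
    (hdepth : ∀ α, α < β → n < (Sq.rpos α).length) :
    tdist (Sq.src 0) u < (2 : ℝ)⁻¹ ^ n := by
  rw [tdist_lt_iff_agr]
  rcases hconv with ⟨-, rfl⟩ | ⟨α, rfl, rfl⟩ | ⟨hlim, hc, -⟩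
  · intro q _; rfl
  · exact agr_src_tgt Sq n hdepth α (IRW.lt_add_one α)
  · obtain ⟨α₀, hα₀, hc⟩ := hc n
    have hs : α₀ + 1 < β := by rw [Ordinal.add_one_eq_succ]; exact hlim.succ_lt hα₀
    have h1 : Agr n (Sq.src 0) (Sq.tgt (α₀ + 1)) := agr_src_tgt Sq n hdepth _ hs
    have h2 : Agr n (Sq.tgt (α₀ + 1)) u :=
      (tdist_lt_iff_agr n _ _).mp (hc _ (IRW.lt_add_one α₀) hs)
    exact h1.trans h2

end IRW
end

section
/- Let t →* u be a convergent (possibly transfinite) reduction sequence and p a position of t such that the redex position of every step in the sequence is disjoint from p. Then the subterm of t at p equals the subterm of u at p. -/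
namespace IRW

variable {Sig V : Type}

lemma step_disj {rules : Set (PTerm Sig V × PTerm Sig V)} {s t : PTerm Sig V} {q p : Pos}
    (h : IsStep rules s q t) (hd : Disj q p) : subAt t p = subAt s p := by
  obtain ⟨-, lr, -, σ, -, ht⟩ := h
  funext r
  have hq : ¬ q <+: p ++ r := by
    intro hqr
    rcases List.prefix_or_prefix_of_prefix hqr (List.prefix_append p r) with h1 | h1
    · exact hd.1 h1
    · exact hd.2 h1
  simp [ht, subAt, replAt, hq]

lemma tdist_agree {t u : PTerm Sig V} {n : ℕ} (h : tdist t u < (2 : ℝ)⁻¹ ^ n)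
    {q : Pos} (hq : q.length = n) : t q = u q := by
  by_contra hne
  have htu : t ≠ u := fun h' => hne (by rw [h'])
  rw [tdist, if_neg htu] at h
  have hmem : n ∈ {m : ℕ | ∃ p : Pos, p.length = m ∧ t p ≠ u p} := ⟨q, hq, hne⟩
  have hle : sInf {m : ℕ | ∃ p : Pos, p.length = m ∧ t p ≠ u p} ≤ n := Nat.sInf_le hmem
  have : (2 : ℝ)⁻¹ ^ n ≤ (2 : ℝ)⁻¹ ^ sInf {m : ℕ | ∃ p : Pos, p.length = m ∧ t p ≠ u p} := by
    apply pow_le_pow_of_le_one (by norm_num) (by norm_num) hle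
  linarith

/-- If the redex position of every step of a convergent reduction sequence from `t`
to `u` is disjoint from `p`, then `t|_p = u|_p`. -/
theorem stmt12 {Sig V : Type} (ar : Sig → ℕ)
    (rules : Set (PTerm Sig V × PTerm Sig V)) (β : Ordinal)
    (Sq : RedSeq ar rules β) (u : PTerm Sig V)
    (hconv : Sq.Converges u) (p : Pos) (hp : p ∈ posOf (Sq.src 0))
    (hdisj : ∀ α, α < β → Disj (Sq.rpos α) p) :
    subAt (Sq.src 0) p = subAt u p := by
  -- main invariant by transfinite induction
  have key : ∀ α, α < β → subAt (Sq.src α) p = subAt (Sq.src 0) p := by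
    intro α
    induction α using Ordinal.limitRecOn with
    | zero => intro _; rfl
    | add_one α ih =>
      intro hsucc
      have hα : α < β := lt_trans (Order.lt_succ α) hsucc
      rw [Sq.succCoh α hsucc, step_disj (Sq.isStep α hα) (hdisj α hα), ih hα]
    | limit β₀ hlim ih =>
      intro hβ₀
      funext q
      obtain ⟨α₀, hα₀, hαtd⟩ := Sq.limSrc β₀ hβ₀ hlim (p ++ q).length
      have hα1 : α₀ + 1 < β₀ := hlim.succ_lt hα₀
      have hα1β : α₀ + 1 < β := lt_trans hα1 hβ₀
      have hagree := tdist_agree (hαtd (α₀ + 1) (Order.lt_succ α₀) hα1) (q := p ++ q) rfl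
      have htgt : subAt (Sq.tgt (α₀ + 1)) p = subAt (Sq.src 0) p := by
        rw [step_disj (Sq.isStep _ hα1β) (hdisj _ hα1β)]
        exact ih _ hα1 (lt_trans hα1 hβ₀)
      calc subAt (Sq.src β₀) p q = Sq.src β₀ (p ++ q) := rfl
        _ = Sq.tgt (α₀ + 1) (p ++ q) := hagree.symm
        _ = subAt (Sq.tgt (α₀ + 1)) p q := rfl
        _ = subAt (Sq.src 0) p q := by rw [htgt]
  rcases hconv with ⟨-, hu⟩ | ⟨α, hβ, hu⟩ | ⟨hlim, htd, -⟩
  · rw [hu]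
  · have hα : α < β := hβ ▸ Order.lt_succ α
    rw [hu, step_disj (Sq.isStep α hα) (hdisj α hα), key α hα]
  · funext q
    obtain ⟨α₀, hα₀, hαtd⟩ := htd (p ++ q).length
    have hα1 : α₀ + 1 < β := hlim.succ_lt hα₀
    have hagree := tdist_agree (hαtd (α₀ + 1) (Order.lt_succ α₀) hα1) (q := p ++ q) rfl
    have htgt : subAt (Sq.tgt (α₀ + 1)) p = subAt (Sq.src 0) p := by
      rw [step_disj (Sq.isStep _ hα1) (hdisj _ hα1)]
      exact key _ hα1
    calc subAt (Sq.src 0) p q = subAt (Sq.tgt (α₀ + 1)) p q := by rw [htgt]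
      _ = Sq.tgt (α₀ + 1) (p ++ q) := rfl
      _ = u (p ++ q) := hagree
      _ = subAt u p q := rfl

end IRW
end
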